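/- Let (Y, 𝓖, ν) be a probability space, U : Y → Y a measure-preserving transformation, and f ∈ L^∞(ν) real-valued. If ∫ limsup_{N→∞} sup_{t∈ℝ} | (1/N) ∑_{n=1}^{N} f(U^{n}y) e^{2πint} | dν(y) = 0, then lim_{N→∞} (1/N) ∑_{n=1}^{N} | ∫ f·(f∘U^{n}) dν |² = 0. -/

import Mathlib

open MeasureTheory Filter Complex

lemma ww_orth_int (L : ℕ) (hL : 0 < L) (m : ℤ) (hm : m ≠ 0) (hm' : m.natAbs < L) :
    ∑ j ∈ Finset.range L, Complex.exp ((j : ℂ) * (2 * (Real.pi : ℂ) * Complex.I * m / L)) = 0 := by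
  have hLc : (L : ℂ) ≠ 0 := Nat.cast_ne_zero.mpr hL.ne'
  set w : ℂ := Complex.exp (2 * (Real.pi : ℂ) * Complex.I * m / L) with hw
  have hterm : ∀ j : ℕ, Complex.exp ((j : ℂ) * (2 * (Real.pi : ℂ) * Complex.I * m / L)) = w ^ j :=
    fun j => by rw [hw, ← Complex.exp_nat_mul]
  have hwL : w ^ L = 1 := by
    rw [hw, ← Complex.exp_nat_mul]
    have : (L : ℂ) * (2 * (Real.pi : ℂ) * Complex.I * m / L) = (m : ℂ) * (2 * Real.pi * Complex.I) := by
      field_simp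
    rw [this, Complex.exp_int_mul_two_pi_mul_I]
  have hw1 : w ≠ 1 := by
    intro hcon
    rw [hw, Complex.exp_eq_one_iff] at hcon
    obtain ⟨n, hn⟩ := hcon
    have hpi : (2 * (Real.pi : ℂ) * Complex.I) ≠ 0 := by
      simp [Real.pi_ne_zero, Complex.I_ne_zero]
    have : (m : ℂ) = n * L := by
      field_simp at hn
      have h2 : (m : ℂ) * (2 * (Real.pi : ℂ) * Complex.I) = (n * L) * (2 * (Real.pi : ℂ) * Complex.I) := by
        linear_combination (2 * (Real.pi : ℂ) * Complex.I) * hn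
      exact mul_right_cancel₀ hpi h2
    have hmn : m = n * (L : ℤ) := by exact_mod_cast this
    rcases eq_or_ne n 0 with rfl | hn0
    · exact hm (by simpa using hmn)
    · have hLm : (L : ℤ) ≤ |m| := by
        rw [hmn, abs_mul]
        have h1 : (1:ℤ) ≤ |n| := Int.one_le_abs (by omega)
        have h2 : |(L:ℤ)| = L := abs_of_nonneg (by positivity)
        nlinarith [abs_nonneg (L:ℤ)]
      have : (L : ℤ) ≤ (m.natAbs : ℤ) := by rwa [Int.abs_eq_natAbs] at hLm
      omega
  simp_rw [hterm]
  rw [geom_sum_eq hw1, hwL]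
  simp

lemma ww_orth_pair (L : ℕ) (hL : 0 < L) (a b : ℕ) (ha : a < L) (hb : b < L) :
    ∑ j ∈ Finset.range L, Complex.exp (2 * (Real.pi : ℂ) * Complex.I * (a : ℂ) * (((j : ℝ)/L : ℝ) : ℂ)) *
      (starRingEnd ℂ) (Complex.exp (2 * (Real.pi : ℂ) * Complex.I * (b : ℂ) * (((j : ℝ)/L : ℝ) : ℂ)))
      = if a = b then (L : ℂ) else 0 := by
  have hLc : (L : ℂ) ≠ 0 := Nat.cast_ne_zero.mpr hL.ne'
  have key : ∀ j : ℕ, Complex.exp (2 * (Real.pi : ℂ) * Complex.I * (a : ℂ) * (((j : ℝ)/L : ℝ) : ℂ)) *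
      (starRingEnd ℂ) (Complex.exp (2 * (Real.pi : ℂ) * Complex.I * (b : ℂ) * (((j : ℝ)/L : ℝ) : ℂ)))
      = Complex.exp ((j : ℂ) * (2 * (Real.pi : ℂ) * Complex.I * ((a : ℤ) - (b : ℤ) : ℤ) / L)) := by
    intro j
    rw [← Complex.exp_conj, ← Complex.exp_add]
    congr 1
    have hc : (starRingEnd ℂ) (2 * (Real.pi : ℂ) * Complex.I * (b : ℂ) * (((j : ℝ)/L : ℝ) : ℂ))
        = - (2 * (Real.pi : ℂ) * Complex.I * (b : ℂ) * (((j : ℝ)/L : ℝ) : ℂ)) := by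
      simp only [map_mul, Complex.conj_I, Complex.conj_ofReal, Complex.conj_natCast, map_ofNat]
      push_cast
      ring
    rw [hc]
    push_cast
    field_simp
    ring
  simp_rw [key]
  rcases eq_or_ne a b with rfl | hab
  · simp
  · rw [if_neg hab]
    apply ww_orth_int L hL _ (by omega)
    omega

lemma ww_ciSup_rat (g : ℝ → ℝ) (hg : Continuous g) (C : ℝ) (hb : ∀ t, g t ≤ C) :
    ⨆ t : ℝ, g t = ⨆ q : ℚ, g q := by
  have hbQ : BddAbove (Set.range fun q : ℚ => g q) := ⟨C, by rintro x ⟨q, rfl⟩; exact hb q⟩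
  have hbR : BddAbove (Set.range g) := ⟨C, by rintro x ⟨t, rfl⟩; exact hb t⟩
  apply le_antisymm
  · apply ciSup_le
    intro t
    have ht : t ∈ closure (Set.range (Rat.cast : ℚ → ℝ)) := Rat.denseRange_cast t
    rw [mem_closure_iff_seq_limit] at ht
    obtain ⟨u, hu_mem, hu_lim⟩ := ht
    apply le_of_tendsto ((hg.tendsto t).comp hu_lim)
    filter_upwards with n
    obtain ⟨q, hq⟩ := hu_mem n
    have : g (u n) = g q := by rw [← hq]
    rw [Function.comp_apply, this]
    exact le_ciSup hbQ q
  · exact ciSup_le fun q => le_ciSup hbR (q : ℝ)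

/-- if the Wiener–Wintner suprema of `f` have vanishing integral, then the
spectral measure of `f` with respect to `U` is continuous, i.e.
`(1/N) ∑_{n=1}^N |∫ f·(f∘Uⁿ) dν|² → 0`. -/
theorem spectral_measure_continuous_of_uniform_ww
    {Y : Type*} [MeasurableSpace Y] (ν : Measure Y) [IsProbabilityMeasure ν]
    (U : Y → Y) (hU : MeasurePreserving U ν ν)
    (f : Y → ℝ) (hfm : Measurable f) (hfb : ∃ M : ℝ, ∀ y, |f y| ≤ M)
    (h : ∫ y, limsup (fun N : ℕ =>
        ⨆ t : ℝ, ‖(1 / (N : ℂ)) * ∑ n ∈ Finset.Icc 1 N,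
          (f (U^[n] y) : ℂ) *
            Complex.exp (2 * (Real.pi : ℂ) * Complex.I * (n : ℂ) * (t : ℂ))‖) atTop ∂ν = 0) :
    Tendsto (fun N : ℕ => (1 / (N : ℝ)) * ∑ n ∈ Finset.Icc 1 N,
      |∫ y, f y * f (U^[n] y) ∂ν| ^ 2) atTop (nhds 0) := by
  classical
  obtain ⟨M₀, hM₀⟩ := hfb
  set M : ℝ := max M₀ 0 with hMdef
  have hM : ∀ y, |f y| ≤ M := fun y => (hM₀ y).trans (le_max_left _ _)
  have hM0 : (0:ℝ) ≤ M := le_max_right _ _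
  have hUk : ∀ n : ℕ, Measurable (U^[n]) := fun n => hU.measurable.iterate n
  have hfUn : ∀ n : ℕ, Measurable (fun y => f (U^[n] y)) := fun n => hfm.comp (hUk n)
  -- the exponential
  set E : ℕ → ℝ → ℂ := fun n t =>
    Complex.exp (2 * (Real.pi : ℂ) * Complex.I * (n : ℂ) * (t : ℂ)) with hEdef
  have hEabs : ∀ n t, ‖E n t‖ = 1 := by
    intro n t
    have harg : 2 * (Real.pi : ℂ) * Complex.I * (n : ℂ) * (t : ℂ)
        = ((2 * Real.pi * n * t : ℝ) : ℂ) * Complex.I := by push_cast; ring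
    have : E n t = Complex.exp (((2 * Real.pi * n * t : ℝ) : ℂ) * Complex.I) := by
      simp only [hEdef]
      exact congrArg Complex.exp harg
    rw [this, Complex.norm_exp_ofReal_mul_I]
  have hEmul : ∀ a b t, E a t * E b t = E (a + b) t := by
    intro a b t
    simp only [hEdef, ← Complex.exp_add]
    exact congrArg Complex.exp (by push_cast; ring)
  -- the WW suprema
  set φ : ℕ → Y → ℝ → ℝ := fun N y t =>
    ‖(1 / (N : ℂ)) * ∑ n ∈ Finset.Icc 1 N, (f (U^[n] y) : ℂ) * E n t‖ with hφdef
  set G : ℕ → Y → ℝ := fun N y => ⨆ t : ℝ, φ N y t with hGdef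
  have φabs : ∀ N y t, φ N y t =
      (1 / (N:ℝ)) * ‖∑ n ∈ Finset.Icc 1 N, (f (U^[n] y) : ℂ) * E n t‖ := by
    intro N y t
    rw [hφdef]
    simp only [norm_mul, norm_div, Complex.norm_natCast, norm_one]
  have φ_bound : ∀ N y t, φ N y t ≤ M := by
    intro N y t
    rcases Nat.eq_zero_or_pos N with rfl | hN
    · simp [hφdef, hM0]
    · rw [φabs]
      have h1 : ‖∑ n ∈ Finset.Icc 1 N, (f (U^[n] y) : ℂ) * E n t‖ ≤ N * M := by
        calc ‖∑ n ∈ Finset.Icc 1 N, (f (U^[n] y) : ℂ) * E n t‖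
            ≤ ∑ n ∈ Finset.Icc 1 N, ‖(f (U^[n] y) : ℂ) * E n t‖ := by
              exact norm_sum_le _ _
          _ ≤ ∑ n ∈ Finset.Icc 1 N, M := by
              apply Finset.sum_le_sum
              intro n _
              rw [norm_mul, hEabs, mul_one, Complex.norm_real, Real.norm_eq_abs]
              exact hM _
          _ = N * M := by rw [Finset.sum_const, Nat.card_Icc]; simp [mul_comm]
      calc (1 / (N:ℝ)) * ‖∑ n ∈ Finset.Icc 1 N, (f (U^[n] y) : ℂ) * E n t‖
          ≤ (1 / (N:ℝ)) * (N * M) := by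
            apply mul_le_mul_of_nonneg_left h1 (by positivity)
        _ = M := by
            field_simp
  have φ_nonneg : ∀ N y t, 0 ≤ φ N y t := fun N y t => norm_nonneg _
  have φ_bddAbove : ∀ N y, BddAbove (Set.range (φ N y)) :=
    fun N y => ⟨M, by rintro x ⟨t, rfl⟩; exact φ_bound N y t⟩
  have φ_le_G : ∀ N y t, φ N y t ≤ G N y := fun N y t => le_ciSup (φ_bddAbove N y) t
  have G_nonneg : ∀ N y, 0 ≤ G N y := fun N y => (φ_nonneg N y 0).trans (φ_le_G N y 0)
  have G_le : ∀ N y, G N y ≤ M := fun N y => ciSup_le (φ_bound N y)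
  have φ_cont : ∀ N y, Continuous (φ N y) := by
    intro N y
    rw [hφdef]
    apply continuous_norm.comp
    apply Continuous.mul continuous_const
    apply continuous_finset_sum
    intro n _
    apply Continuous.mul continuous_const
    rw [hEdef]
    exact Complex.continuous_exp.comp ((continuous_const).mul Complex.continuous_ofReal)
  have φ_meas : ∀ N t, Measurable (fun y => φ N y t) := by
    intro N t
    rw [hφdef]
    apply continuous_norm.measurable.comp
    apply Measurable.const_mul
    apply Finset.measurable_sum
    intro n _
    exact (Complex.measurable_ofReal.comp (hfUn n)).mul_const _
  have G_meas : ∀ N, Measurable (G N) := by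
    intro N
    have : G N = fun y => ⨆ q : ℚ, φ N y (q : ℝ) := by
      funext y
      exact ww_ciSup_rat (φ N y) (φ_cont N y) M (φ_bound N y)
    rw [this]
    exact Measurable.iSup (fun q => φ_meas N q)
  -- integrability helper
  have intBdd : ∀ (g : Y → ℂ), Measurable g → ∀ C : ℝ, (∀ y, ‖g y‖ ≤ C) →
      Integrable g ν := by
    intro g hg C hC
    refine ⟨hg.aestronglyMeasurable, HasFiniteIntegral.of_bounded (C := C) ?_⟩
    filter_upwards with y using hC y
  have intBddR : ∀ (g : Y → ℝ), Measurable g → ∀ C : ℝ, (∀ y, |g y| ≤ C) →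
      Integrable g ν := by
    intro g hg C hC
    refine ⟨hg.aestronglyMeasurable, HasFiniteIntegral.of_bounded (C := C) ?_⟩
    filter_upwards with y using hC y
  have G_int : ∀ N, Integrable (G N) ν := by
    intro N
    apply intBddR _ (G_meas N) M
    intro y
    rw [_root_.abs_of_nonneg (G_nonneg N y)]
    exact G_le N y
  -- Step A : ∫ G N → 0
  have hg_meas : Measurable (fun y => limsup (fun N => G N y) atTop) :=
    Measurable.limsup (fun N => G_meas N)
  have hg_bdd : ∀ y, |limsup (fun N => G N y) atTop| ≤ M := by
    intro y
    have hb1 : IsBoundedUnder (· ≤ ·) atTop (fun N => G N y) :=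
      isBoundedUnder_of ⟨M, fun N => G_le N y⟩
    have hb2 : IsBoundedUnder (· ≥ ·) atTop (fun N => G N y) :=
      isBoundedUnder_of ⟨0, fun N => G_nonneg N y⟩
    rw [abs_le]
    constructor
    · calc -M ≤ 0 := by linarith
        _ ≤ liminf (fun N => G N y) atTop :=
          le_liminf_of_le hb1.isCoboundedUnder_ge (by filter_upwards with N using G_nonneg N y)
        _ ≤ limsup (fun N => G N y) atTop := liminf_le_limsup hb1 hb2
    · exact limsup_le_of_le hb2.isCoboundedUnder_le (by filter_upwards with N using G_le N y)
  have hg_nonneg : ∀ y, 0 ≤ limsup (fun N => G N y) atTop := by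
    intro y
    have hb1 : IsBoundedUnder (· ≤ ·) atTop (fun N => G N y) :=
      isBoundedUnder_of ⟨M, fun N => G_le N y⟩
    have hb2 : IsBoundedUnder (· ≥ ·) atTop (fun N => G N y) :=
      isBoundedUnder_of ⟨0, fun N => G_nonneg N y⟩
    calc (0:ℝ) ≤ liminf (fun N => G N y) atTop :=
          le_liminf_of_le hb1.isCoboundedUnder_ge (by filter_upwards with N using G_nonneg N y)
      _ ≤ limsup (fun N => G N y) atTop := liminf_le_limsup hb1 hb2
  have hg_int : Integrable (fun y => limsup (fun N => G N y) atTop) ν :=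
    intBddR _ hg_meas M hg_bdd
  have hg_zero : (fun y => limsup (fun N => G N y) atTop) =ᵐ[ν] 0 := by
    rw [← integral_eq_zero_iff_of_nonneg_ae
      (Filter.Eventually.of_forall hg_nonneg) hg_int]
    exact h
  have hG_tendsto_ae : ∀ᵐ y ∂ν, Tendsto (fun N => G N y) atTop (nhds 0) := by
    filter_upwards [hg_zero] with y hy
    have hb1 : IsBoundedUnder (· ≤ ·) atTop (fun N => G N y) :=
      isBoundedUnder_of ⟨M, fun N => G_le N y⟩
    have hb2 : IsBoundedUnder (· ≥ ·) atTop (fun N => G N y) :=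
      isBoundedUnder_of ⟨0, fun N => G_nonneg N y⟩
    have hlimsup : limsup (fun N => G N y) atTop = 0 := hy
    have hliminf : liminf (fun N => G N y) atTop = 0 := by
      apply le_antisymm
      · rw [← hlimsup]; exact liminf_le_limsup hb1 hb2
      · exact le_liminf_of_le hb1.isCoboundedUnder_ge
          (by filter_upwards with N using G_nonneg N y)
    exact tendsto_of_liminf_eq_limsup hliminf hlimsup hb1 hb2
  have I_tendsto : Tendsto (fun N => ∫ y, G N y ∂ν) atTop (nhds 0) := by
    have := tendsto_integral_of_dominated_convergence (μ := ν)
      (F := fun N y => G N y) (f := fun _ => (0:ℝ)) (bound := fun _ => M)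
      (fun N => (G_meas N).aestronglyMeasurable)
      (integrable_const M)
      (fun N => by
        filter_upwards with y
        rw [Real.norm_eq_abs, _root_.abs_of_nonneg (G_nonneg N y)]
        exact G_le N y)
      hG_tendsto_ae
    simpa using this
  -- Step B : correlations
  set c : ℕ → ℝ := fun n => ∫ y, f y * f (U^[n] y) ∂ν with hcdef
  have prod_int : ∀ k k' : ℕ, Integrable (fun y => f (U^[k] y) * f (U^[k'] y)) ν := by
    intro k k'
    apply intBddR _ ((hfUn k).mul (hfUn k')) (M * M)
    intro y
    rw [Pi.mul_apply, abs_mul]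
    exact mul_le_mul (hM _) (hM _) (abs_nonneg _) hM0
  have shift : ∀ k n : ℕ, ∫ y, f (U^[k] y) * f (U^[k + n] y) ∂ν = c n := by
    intro k n
    have hgm : Measurable (fun z => f z * f (U^[n] z)) := hfm.mul (hfUn n)
    have h1 : ∀ y, f (U^[k] y) * f (U^[k + n] y) = (fun z => f z * f (U^[n] z)) (U^[k] y) := by
      intro y
      simp only []
      rw [add_comm, Function.iterate_add_apply]
    calc ∫ y, f (U^[k] y) * f (U^[k + n] y) ∂ν
        = ∫ y, (fun z => f z * f (U^[n] z)) (U^[k] y) ∂ν := by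
          exact integral_congr_ae (Filter.Eventually.of_forall h1)
      _ = ∫ z, f z * f (U^[n] z) ∂ν := by
          rw [← MeasureTheory.integral_map (hUk k).aemeasurable hgm.aestronglyMeasurable,
            (hU.iterate k).map_eq]
      _ = c n := rfl
  have hc0 : 0 ≤ c 0 := by
    rw [hcdef]
    apply integral_nonneg
    intro y
    simp only [Function.iterate_zero_apply]
    exact mul_self_nonneg _
  -- the key inequality
  have key : ∀ N : ℕ, 1 ≤ N → ∑ n ∈ Finset.Icc 1 N, (c n)^2 ≤
      (N : ℝ) * (2 * c 0 * (M * ∫ y, G N y ∂ν)) := by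
    intro N hN
    set I : ℝ := ∫ y, G N y ∂ν with hIdef
    have hI0 : 0 ≤ I := integral_nonneg (fun y => G_nonneg N y)
    set K : ℕ := 2 * N with hKdef
    set L : ℕ := 4 * N with hLdef
    have hL : 0 < L := by omega
    set τ : ℕ → ℝ := fun j => (j : ℝ) / (L : ℝ) with hτdef
    set A : ℕ → ℂ := fun j => ∑ n ∈ Finset.Icc 1 N, ((c n : ℝ) : ℂ) * E n (τ j) with hAdef
    set S : ℕ → Y → ℂ := fun j y => ∑ k ∈ Finset.Icc 1 K, (f (U^[k] y) : ℂ) * E k (τ j)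
      with hSdef
    set r : ℕ → ℝ := fun j => ∫ y, Complex.normSq (S j y) ∂ν with hrdef
    have r_nonneg : ∀ j, 0 ≤ r j := fun j => integral_nonneg (fun y => Complex.normSq_nonneg _)
    -- expansion of r as a double sum of correlations
    have r_expand : ∀ j, ((r j : ℝ) : ℂ) = ∑ k' ∈ Finset.Icc 1 K, ∑ k ∈ Finset.Icc 1 K,
        ((∫ y, f (U^[k] y) * f (U^[k'] y) ∂ν : ℝ) : ℂ) *
          (E k' (τ j) * (starRingEnd ℂ) (E k (τ j))) := by
      intro j
      have hterm_int : ∀ k k' : ℕ, Integrable (fun y =>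
          ((f (U^[k] y) * f (U^[k'] y) : ℝ) : ℂ) *
            (E k' (τ j) * (starRingEnd ℂ) (E k (τ j)))) ν := by
        intro k k'
        apply intBdd _
          ((Complex.measurable_ofReal.comp ((hfUn k).mul (hfUn k'))).mul_const _) (M * M)
        intro y
        simp only [Function.comp_apply, Pi.mul_apply, norm_mul, Complex.norm_real, Real.norm_eq_abs, Complex.norm_conj, hEabs,
          mul_one, abs_mul]
        exact mul_le_mul (hM _) (hM _) (abs_nonneg _) hM0
      have hpt : ∀ y : Y, ((Complex.normSq (S j y) : ℝ) : ℂ) = ∑ k' ∈ Finset.Icc 1 K,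
          ∑ k ∈ Finset.Icc 1 K, ((f (U^[k] y) * f (U^[k'] y) : ℝ) : ℂ) *
            (E k' (τ j) * (starRingEnd ℂ) (E k (τ j))) := by
        intro y
        rw [← Complex.mul_conj]
        simp only [hSdef]
        rw [map_sum, Finset.sum_mul_sum]
        apply Finset.sum_congr rfl
        intro k' _
        apply Finset.sum_congr rfl
        intro k _
        rw [map_mul, Complex.conj_ofReal]
        push_cast
        ring
      calc ((r j : ℝ) : ℂ) = ∫ y, ((Complex.normSq (S j y) : ℝ) : ℂ) ∂ν := by
            rw [hrdef]
            exact (integral_ofReal).symm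
        _ = ∫ y, (∑ k' ∈ Finset.Icc 1 K, ∑ k ∈ Finset.Icc 1 K,
              ((f (U^[k] y) * f (U^[k'] y) : ℝ) : ℂ) *
                (E k' (τ j) * (starRingEnd ℂ) (E k (τ j)))) ∂ν :=
            integral_congr_ae (Filter.Eventually.of_forall hpt)
        _ = ∑ k' ∈ Finset.Icc 1 K, ∫ y, (∑ k ∈ Finset.Icc 1 K,
              ((f (U^[k] y) * f (U^[k'] y) : ℝ) : ℂ) *
                (E k' (τ j) * (starRingEnd ℂ) (E k (τ j)))) ∂ν :=
            integral_finset_sum _ (fun k' _ => integrable_finset_sum _ (fun k _ => hterm_int k k'))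
        _ = ∑ k' ∈ Finset.Icc 1 K, ∑ k ∈ Finset.Icc 1 K, ∫ y,
              ((f (U^[k] y) * f (U^[k'] y) : ℝ) : ℂ) *
                (E k' (τ j) * (starRingEnd ℂ) (E k (τ j))) ∂ν := by
            apply Finset.sum_congr rfl
            intro k' _
            exact integral_finset_sum _ (fun k _ => hterm_int k k')
        _ = ∑ k' ∈ Finset.Icc 1 K, ∑ k ∈ Finset.Icc 1 K,
              ((∫ y, f (U^[k] y) * f (U^[k'] y) ∂ν : ℝ) : ℂ) *
                (E k' (τ j) * (starRingEnd ℂ) (E k (τ j))) := by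
            apply Finset.sum_congr rfl
            intro k' _
            apply Finset.sum_congr rfl
            intro k _
            rw [integral_mul_const]
            congr 1
            exact integral_ofReal
    -- uniform bound on A via the WW integral
    have A_bound : ∀ j, ‖A j‖ ≤ (N : ℝ) * (M * I) := by
      intro j
      have hPint : ∀ n : ℕ, Integrable (fun y => ((f y * f (U^[n] y) : ℝ) : ℂ) * E n (τ j)) ν := by
        intro n
        apply intBdd _ ((Complex.measurable_ofReal.comp (hfm.mul (hfUn n))).mul_const _) (M * M)
        intro y
        simp only [Function.comp_apply, Pi.mul_apply, norm_mul, hEabs, mul_one, Complex.norm_real, Real.norm_eq_abs, abs_mul]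
        exact mul_le_mul (hM _) (hM _) (abs_nonneg _) hM0
      have hpt : ∀ y : Y, (f y : ℂ) * (∑ n ∈ Finset.Icc 1 N, (f (U^[n] y) : ℂ) * E n (τ j))
          = ∑ n ∈ Finset.Icc 1 N, ((f y * f (U^[n] y) : ℝ) : ℂ) * E n (τ j) := by
        intro y
        rw [Finset.mul_sum]
        apply Finset.sum_congr rfl
        intro n _
        push_cast
        ring
      have repr : (∫ y, (f y : ℂ) *
          (∑ n ∈ Finset.Icc 1 N, (f (U^[n] y) : ℂ) * E n (τ j)) ∂ν) = A j := by
        calc ∫ y, (f y : ℂ) * (∑ n ∈ Finset.Icc 1 N, (f (U^[n] y) : ℂ) * E n (τ j)) ∂ν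
            = ∫ y, ∑ n ∈ Finset.Icc 1 N, ((f y * f (U^[n] y) : ℝ) : ℂ) * E n (τ j) ∂ν :=
              integral_congr_ae (Filter.Eventually.of_forall hpt)
          _ = ∑ n ∈ Finset.Icc 1 N, ∫ y, ((f y * f (U^[n] y) : ℝ) : ℂ) * E n (τ j) ∂ν :=
              integral_finset_sum _ (fun n _ => hPint n)
          _ = ∑ n ∈ Finset.Icc 1 N, (∫ y, ((f y * f (U^[n] y) : ℝ) : ℂ) ∂ν) * E n (τ j) := by
              apply Finset.sum_congr rfl
              intro n _
              rw [integral_mul_const]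
          _ = A j := by
              rw [hAdef]
              apply Finset.sum_congr rfl
              intro n _
              congr 1
              exact integral_ofReal
      have hSum_meas : Measurable (fun y => ∑ n ∈ Finset.Icc 1 N, (f (U^[n] y) : ℂ) * E n (τ j)) := by
        apply Finset.measurable_sum
        intro n _
        exact (Complex.measurable_ofReal.comp (hfUn n)).mul_const _
      have hP2 : Integrable (fun y => (f y : ℂ) *
          (∑ n ∈ Finset.Icc 1 N, (f (U^[n] y) : ℂ) * E n (τ j))) ν := by
        apply intBdd _ ((Complex.measurable_ofReal.comp hfm).mul hSum_meas) (M * ((N:ℝ) * M))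
        intro y
        simp only [Function.comp_apply, Pi.mul_apply, norm_mul, Complex.norm_real, Real.norm_eq_abs]
        apply mul_le_mul (hM _) ?_ (norm_nonneg _) hM0
        calc ‖∑ n ∈ Finset.Icc 1 N, (f (U^[n] y) : ℂ) * E n (τ j)‖
            ≤ ∑ n ∈ Finset.Icc 1 N, ‖(f (U^[n] y) : ℂ) * E n (τ j)‖ :=
              norm_sum_le _ _
          _ ≤ ∑ n ∈ Finset.Icc 1 N, M := by
              apply Finset.sum_le_sum
              intro n _
              rw [norm_mul, hEabs, mul_one, Complex.norm_real, Real.norm_eq_abs]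
              exact hM _
          _ = (N:ℝ) * M := by rw [Finset.sum_const, Nat.card_Icc]; simp [mul_comm]
      have hNne : (N : ℝ) ≠ 0 := by
        have : (0:ℝ) < N := by exact_mod_cast hN
        linarith
      rw [← repr]
      calc ‖∫ y, (f y : ℂ) *
              (∑ n ∈ Finset.Icc 1 N, (f (U^[n] y) : ℂ) * E n (τ j)) ∂ν‖
          ≤ ∫ y, ‖(f y : ℂ) *
              (∑ n ∈ Finset.Icc 1 N, (f (U^[n] y) : ℂ) * E n (τ j))‖ ∂ν := by
            simpa using norm_integral_le_integral_norm
              (fun y => (f y : ℂ) * (∑ n ∈ Finset.Icc 1 N, (f (U^[n] y) : ℂ) * E n (τ j))) (μ := ν)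
        _ ≤ ∫ y, M * ((N:ℝ) * G N y) ∂ν := by
            apply integral_mono hP2.norm (((G_int N).const_mul _).const_mul _)
            intro y
            show ‖(f y : ℂ) * (∑ n ∈ Finset.Icc 1 N, (f (U^[n] y) : ℂ) * E n (τ j))‖
              ≤ M * ((N:ℝ) * G N y)
            rw [norm_mul, Complex.norm_real, Real.norm_eq_abs]
            have habs_sum : ‖∑ n ∈ Finset.Icc 1 N, (f (U^[n] y) : ℂ) * E n (τ j)‖
                = (N : ℝ) * φ N y (τ j) := by
              rw [φabs]
              field_simp
            apply mul_le_mul (hM _) ?_ (norm_nonneg _) hM0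
            rw [habs_sum]
            exact mul_le_mul_of_nonneg_left (φ_le_G N y (τ j)) (by positivity)
        _ = M * ((N:ℝ) * I) := by
            rw [integral_const_mul, integral_const_mul, hIdef]
        _ = (N : ℝ) * (M * I) := by ring
    -- discrete orthogonality
    have orth : ∀ a b : ℕ, a < L → b < L →
        ∑ j ∈ Finset.range L, E a (τ j) * (starRingEnd ℂ) (E b (τ j))
          = if a = b then (L : ℂ) else 0 := by
      intro a b ha hb
      exact ww_orth_pair L hL a b ha hb
    -- the master orthogonality identity
    have master : ∑ j ∈ Finset.range L, (starRingEnd ℂ) (A j) * ((r j : ℝ) : ℂ) =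
        (L : ℂ) * ∑ n ∈ Finset.Icc 1 N, ((c n : ℝ) : ℂ)^2 * (((K - n : ℕ) : ℝ) : ℂ) := by
      have conjA : ∀ j, (starRingEnd ℂ) (A j)
          = ∑ n ∈ Finset.Icc 1 N, ((c n : ℝ) : ℂ) * (starRingEnd ℂ) (E n (τ j)) := by
        intro j
        simp only [hAdef, map_sum, map_mul, Complex.conj_ofReal]
      have step1 : ∀ j, (starRingEnd ℂ) (A j) * ((r j : ℝ) : ℂ)
          = ∑ n ∈ Finset.Icc 1 N, ∑ k' ∈ Finset.Icc 1 K, ∑ k ∈ Finset.Icc 1 K,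
            (((c n : ℝ) : ℂ) * ((∫ y, f (U^[k] y) * f (U^[k'] y) ∂ν : ℝ) : ℂ)) *
              (E k' (τ j) * (starRingEnd ℂ) (E (n + k) (τ j))) := by
        intro j
        rw [conjA j, r_expand j, Finset.sum_mul_sum]
        apply Finset.sum_congr rfl
        intro n _
        apply Finset.sum_congr rfl
        intro k' _
        rw [Finset.mul_sum]
        apply Finset.sum_congr rfl
        intro k _
        have hc2 : (starRingEnd ℂ) (E n (τ j)) * (starRingEnd ℂ) (E k (τ j))
            = (starRingEnd ℂ) (E (n + k) (τ j)) := by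
          rw [← map_mul, hEmul]
        rw [← hc2]
        ring
      calc ∑ j ∈ Finset.range L, (starRingEnd ℂ) (A j) * ((r j : ℝ) : ℂ)
          = ∑ j ∈ Finset.range L, ∑ n ∈ Finset.Icc 1 N, ∑ k' ∈ Finset.Icc 1 K,
              ∑ k ∈ Finset.Icc 1 K,
              (((c n : ℝ) : ℂ) * ((∫ y, f (U^[k] y) * f (U^[k'] y) ∂ν : ℝ) : ℂ)) *
                (E k' (τ j) * (starRingEnd ℂ) (E (n + k) (τ j))) :=
            Finset.sum_congr rfl (fun j _ => step1 j)
        _ = ∑ n ∈ Finset.Icc 1 N, ∑ k' ∈ Finset.Icc 1 K, ∑ k ∈ Finset.Icc 1 K,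
              (((c n : ℝ) : ℂ) * ((∫ y, f (U^[k] y) * f (U^[k'] y) ∂ν : ℝ) : ℂ)) *
                (∑ j ∈ Finset.range L, E k' (τ j) * (starRingEnd ℂ) (E (n + k) (τ j))) := by
            rw [Finset.sum_comm]
            apply Finset.sum_congr rfl
            intro n _
            rw [Finset.sum_comm]
            apply Finset.sum_congr rfl
            intro k' _
            rw [Finset.sum_comm]
            apply Finset.sum_congr rfl
            intro k _
            rw [← Finset.mul_sum]
        _ = ∑ n ∈ Finset.Icc 1 N, ∑ k' ∈ Finset.Icc 1 K, ∑ k ∈ Finset.Icc 1 K,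
              (((c n : ℝ) : ℂ) * ((∫ y, f (U^[k] y) * f (U^[k'] y) ∂ν : ℝ) : ℂ)) *
                (if k' = n + k then (L : ℂ) else 0) := by
            apply Finset.sum_congr rfl
            intro n hn
            apply Finset.sum_congr rfl
            intro k' hk'
            apply Finset.sum_congr rfl
            intro k hk
            rw [Finset.mem_Icc] at hn hk' hk
            rw [orth k' (n + k) (by omega) (by omega)]
        _ = ∑ n ∈ Finset.Icc 1 N, (((c n : ℝ) : ℂ)^2 * (L : ℂ)) * (((K - n : ℕ) : ℝ) : ℂ) := by
            apply Finset.sum_congr rfl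
            intro n hn
            have hn' := Finset.mem_Icc.mp hn
            rw [Finset.sum_comm]
            have inner : ∀ k ∈ Finset.Icc 1 K, ∑ k' ∈ Finset.Icc 1 K,
                (((c n : ℝ) : ℂ) * ((∫ y, f (U^[k] y) * f (U^[k'] y) ∂ν : ℝ) : ℂ)) *
                  (if k' = n + k then (L : ℂ) else 0)
                = (if n + k ∈ Finset.Icc 1 K then ((c n : ℝ) : ℂ)^2 * (L : ℂ) else 0) := by
              intro k hk
              have hite : ∀ k' ∈ Finset.Icc 1 K,
                  (((c n : ℝ) : ℂ) * ((∫ y, f (U^[k] y) * f (U^[k'] y) ∂ν : ℝ) : ℂ)) *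
                    (if k' = n + k then (L : ℂ) else 0)
                  = (if k' = n + k then
                      (((c n : ℝ) : ℂ) * ((∫ y, f (U^[k] y) * f (U^[k'] y) ∂ν : ℝ) : ℂ)) * (L : ℂ)
                    else 0) := by
                intro k' _
                rw [mul_ite, mul_zero]
              rw [Finset.sum_congr rfl hite, Finset.sum_ite_eq']
              split_ifs with hmem
              · have hdc : (∫ y, f (U^[k] y) * f (U^[n + k] y) ∂ν) = c n := by
                  rw [add_comm]
                  exact shift k n
                rw [hdc]
                ring
              · rfl
            rw [Finset.sum_congr rfl inner, ← Finset.sum_filter]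
            have hfilt : (Finset.Icc 1 K).filter (fun k => n + k ∈ Finset.Icc 1 K)
                = Finset.Icc 1 (K - n) := by
              ext k
              simp only [Finset.mem_filter, Finset.mem_Icc]
              omega
            rw [hfilt, Finset.sum_const, Nat.card_Icc]
            have hcard : (K - n + 1 - 1) = K - n := by omega
            rw [hcard, nsmul_eq_mul]
            push_cast
            ring
        _ = (L : ℂ) * ∑ n ∈ Finset.Icc 1 N, ((c n : ℝ) : ℂ)^2 * (((K - n : ℕ) : ℝ) : ℂ) := by
            rw [Finset.mul_sum]
            apply Finset.sum_congr rfl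
            intro n _
            ring
    -- total mass of r
    have massC : ∑ j ∈ Finset.range L, ((r j : ℝ) : ℂ)
        = (L : ℂ) * (((K : ℕ) : ℂ) * ((c 0 : ℝ) : ℂ)) := by
      calc ∑ j ∈ Finset.range L, ((r j : ℝ) : ℂ)
          = ∑ j ∈ Finset.range L, ∑ k' ∈ Finset.Icc 1 K, ∑ k ∈ Finset.Icc 1 K,
              ((∫ y, f (U^[k] y) * f (U^[k'] y) ∂ν : ℝ) : ℂ) *
                (E k' (τ j) * (starRingEnd ℂ) (E k (τ j))) :=
            Finset.sum_congr rfl (fun j _ => r_expand j)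
        _ = ∑ k' ∈ Finset.Icc 1 K, ∑ k ∈ Finset.Icc 1 K,
              ((∫ y, f (U^[k] y) * f (U^[k'] y) ∂ν : ℝ) : ℂ) *
                (∑ j ∈ Finset.range L, E k' (τ j) * (starRingEnd ℂ) (E k (τ j))) := by
            rw [Finset.sum_comm]
            apply Finset.sum_congr rfl
            intro k' _
            rw [Finset.sum_comm]
            apply Finset.sum_congr rfl
            intro k _
            rw [← Finset.mul_sum]
        _ = ∑ k' ∈ Finset.Icc 1 K, ∑ k ∈ Finset.Icc 1 K,
              ((∫ y, f (U^[k] y) * f (U^[k'] y) ∂ν : ℝ) : ℂ) *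
                (if k' = k then (L : ℂ) else 0) := by
            apply Finset.sum_congr rfl
            intro k' hk'
            apply Finset.sum_congr rfl
            intro k hk
            rw [Finset.mem_Icc] at hk' hk
            rw [orth k' k (by omega) (by omega)]
        _ = ∑ k' ∈ Finset.Icc 1 K, ((c 0 : ℝ) : ℂ) * (L : ℂ) := by
            apply Finset.sum_congr rfl
            intro k' hk'
            have hite : ∀ k ∈ Finset.Icc 1 K,
                ((∫ y, f (U^[k] y) * f (U^[k'] y) ∂ν : ℝ) : ℂ) * (if k' = k then (L : ℂ) else 0)
                = (if k' = k then
                    ((∫ y, f (U^[k] y) * f (U^[k'] y) ∂ν : ℝ) : ℂ) * (L : ℂ) else 0) := by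
              intro k _
              rw [mul_ite, mul_zero]
            rw [Finset.sum_congr rfl hite, Finset.sum_ite_eq, if_pos hk']
            have hdc : (∫ y, f (U^[k'] y) * f (U^[k'] y) ∂ν) = c 0 := by
              simpa using shift k' 0
            rw [hdc]
        _ = (L : ℂ) * (((K : ℕ) : ℂ) * ((c 0 : ℝ) : ℂ)) := by
            rw [Finset.sum_const, Nat.card_Icc, nsmul_eq_mul]
            have : (K + 1 - 1) = K := by omega
            rw [this]
            ring
    have mass : ∑ j ∈ Finset.range L, r j = (L : ℝ) * ((K : ℝ) * c 0) := by
      have := massC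
      push_cast at this
      exact_mod_cast this
    -- combine
    have lhs_eval : ‖∑ j ∈ Finset.range L, (starRingEnd ℂ) (A j) * ((r j : ℝ) : ℂ)‖
        = (L : ℝ) * ∑ n ∈ Finset.Icc 1 N, (c n)^2 * ((K - n : ℕ) : ℝ) := by
      rw [master]
      have hre : (L : ℂ) * ∑ n ∈ Finset.Icc 1 N, ((c n : ℝ) : ℂ)^2 * (((K - n : ℕ) : ℝ) : ℂ)
          = (((L : ℝ) * ∑ n ∈ Finset.Icc 1 N, (c n)^2 * ((K - n : ℕ) : ℝ) : ℝ) : ℂ) := by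
        push_cast
        ring
      rw [hre, Complex.norm_real, Real.norm_eq_abs]
      apply _root_.abs_of_nonneg
      apply mul_nonneg (by positivity)
      apply Finset.sum_nonneg
      intro n _
      positivity
    have habs : ‖∑ j ∈ Finset.range L, (starRingEnd ℂ) (A j) * ((r j : ℝ) : ℂ)‖
        ≤ ((N : ℝ) * (M * I)) * ((L : ℝ) * ((K : ℝ) * c 0)) := by
      calc ‖∑ j ∈ Finset.range L, (starRingEnd ℂ) (A j) * ((r j : ℝ) : ℂ)‖
          ≤ ∑ j ∈ Finset.range L, ‖(starRingEnd ℂ) (A j) * ((r j : ℝ) : ℂ)‖ :=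
            norm_sum_le _ _
        _ ≤ ∑ j ∈ Finset.range L, ((N : ℝ) * (M * I)) * r j := by
            apply Finset.sum_le_sum
            intro j _
            rw [norm_mul, Complex.norm_conj, Complex.norm_real, Real.norm_eq_abs,
              _root_.abs_of_nonneg (r_nonneg j)]
            exact mul_le_mul_of_nonneg_right (A_bound j) (r_nonneg j)
        _ = ((N : ℝ) * (M * I)) * ((L : ℝ) * ((K : ℝ) * c 0)) := by
            rw [← Finset.mul_sum, mass]
    -- put it together
    have hsum_ge : (N : ℝ) * ∑ n ∈ Finset.Icc 1 N, (c n)^2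
        ≤ ∑ n ∈ Finset.Icc 1 N, (c n)^2 * ((K - n : ℕ) : ℝ) := by
      rw [Finset.mul_sum]
      apply Finset.sum_le_sum
      intro n hn
      rw [Finset.mem_Icc] at hn
      have h1 : (N : ℝ) ≤ ((K - n : ℕ) : ℝ) := by
        have : N ≤ K - n := by omega
        exact_mod_cast this
      calc (N : ℝ) * (c n)^2 = (c n)^2 * (N : ℝ) := by ring
        _ ≤ (c n)^2 * ((K - n : ℕ) : ℝ) := by
            exact mul_le_mul_of_nonneg_left h1 (sq_nonneg _)
    have hL0 : (0:ℝ) < (L : ℝ) := by exact_mod_cast hL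
    have hmain : (L : ℝ) * ((N : ℝ) * ∑ n ∈ Finset.Icc 1 N, (c n)^2)
        ≤ (L : ℝ) * (((N : ℝ) * (M * I)) * ((K : ℝ) * c 0)) := by
      calc (L : ℝ) * ((N : ℝ) * ∑ n ∈ Finset.Icc 1 N, (c n)^2)
          ≤ (L : ℝ) * ∑ n ∈ Finset.Icc 1 N, (c n)^2 * ((K - n : ℕ) : ℝ) :=
            mul_le_mul_of_nonneg_left hsum_ge hL0.le
        _ = ‖∑ j ∈ Finset.range L, (starRingEnd ℂ) (A j) * ((r j : ℝ) : ℂ)‖ :=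
            lhs_eval.symm
        _ ≤ ((N : ℝ) * (M * I)) * ((L : ℝ) * ((K : ℝ) * c 0)) := habs
        _ = (L : ℝ) * (((N : ℝ) * (M * I)) * ((K : ℝ) * c 0)) := by ring
    have h2 : (N : ℝ) * ∑ n ∈ Finset.Icc 1 N, (c n)^2
        ≤ ((N : ℝ) * (M * I)) * ((K : ℝ) * c 0) := le_of_mul_le_mul_left hmain hL0
    have hKcast : (K : ℝ) = 2 * (N : ℝ) := by rw [hKdef]; push_cast; ring
    calc ∑ n ∈ Finset.Icc 1 N, (c n)^2
        = (1 / (N : ℝ)) * ((N : ℝ) * ∑ n ∈ Finset.Icc 1 N, (c n)^2) := by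
          field_simp
      _ ≤ (1 / (N : ℝ)) * (((N : ℝ) * (M * I)) * ((K : ℝ) * c 0)) := by
          apply mul_le_mul_of_nonneg_left h2 (by positivity)
      _ = (N : ℝ) * (2 * c 0 * (M * I)) := by
          rw [hKcast]
          have hN0 : (N : ℝ) ≠ 0 := by
            have : (0:ℝ) < N := by exact_mod_cast hN
            linarith
          field_simp
  -- squeeze
  have htend : Tendsto (fun N : ℕ => 2 * c 0 * (M * ∫ y, G N y ∂ν)) atTop (nhds 0) := by
    have h1 : Tendsto (fun N : ℕ => M * ∫ y, G N y ∂ν) atTop (nhds (M * 0)) :=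
      I_tendsto.const_mul M
    have h2 : Tendsto (fun N : ℕ => 2 * c 0 * (M * ∫ y, G N y ∂ν)) atTop
        (nhds (2 * c 0 * (M * 0))) := h1.const_mul (2 * c 0)
    simpa using h2
  apply tendsto_of_tendsto_of_tendsto_of_le_of_le' tendsto_const_nhds htend
  · filter_upwards with N
    apply mul_nonneg (by positivity)
    apply Finset.sum_nonneg
    intro n _
    positivity
  · filter_upwards [eventually_ge_atTop 1] with N hN
    have hN0 : (N : ℝ) ≠ 0 := by
      have : (0:ℝ) < N := by exact_mod_cast hN
      linarith
    have heq : ∑ n ∈ Finset.Icc 1 N, |c n| ^ 2 = ∑ n ∈ Finset.Icc 1 N, (c n)^2 := by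
      apply Finset.sum_congr rfl
      intro n _
      exact sq_abs _
    rw [heq]
    calc (1 / (N:ℝ)) * ∑ n ∈ Finset.Icc 1 N, (c n)^2
        ≤ (1 / (N:ℝ)) * ((N : ℝ) * (2 * c 0 * (M * ∫ y, G N y ∂ν))) :=
          mul_le_mul_of_nonneg_left (key N hN) (by positivity)
      _ = 2 * c 0 * (M * ∫ y, G N y ∂ν) := by
          field_simp
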